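/- Let A : R^{n₁×n₂} → R^m be a linear map satisfying the rank-2r restricted isometry property with constant δ ∈ [0,1): for every matrix M of rank at most 2r, (1−δ)‖M‖_F² ≤ ‖A(M)‖₂² ≤ (1+δ)‖M‖_F². Then for any matrix X₁ of rank at most r and any matrix R ∈ R^{n₂×r}, one has ‖(A*A − I)(X₁)·R‖_F ≤ δ·‖X₁‖_F·‖R‖_op, where A* is the adjoint of A and I the identity map. -/

import Mathlib

open Matrix

/-- Frobenius norm of a real matrix. -/
noncomputable def frob {n₁ n₂ : ℕ} (A : Matrix (Fin n₁) (Fin n₂) ℝ) : ℝ :=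
  Real.sqrt (∑ i, ∑ j, (A i j) ^ 2)

/-- The operator norm (largest singular value) of a matrix. -/
noncomputable def opNorm {n₁ n₂ : ℕ} (A : Matrix (Fin n₁) (Fin n₂) ℝ) : ℝ :=
  ‖LinearMap.toContinuousLinearMap (Matrix.toEuclideanLin A)‖

lemma frob_nonneg {n₁ n₂ : ℕ} (A : Matrix (Fin n₁) (Fin n₂) ℝ) : 0 ≤ frob A :=
  Real.sqrt_nonneg _

lemma frob_sq {n₁ n₂ : ℕ} (A : Matrix (Fin n₁) (Fin n₂) ℝ) :
    frob A ^ 2 = ∑ i, ∑ j, (A i j) ^ 2 := by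
  apply Real.sq_sqrt
  exact Finset.sum_nonneg fun i _ => Finset.sum_nonneg fun j _ => sq_nonneg _

lemma frob_eq_zero {n₁ n₂ : ℕ} {A : Matrix (Fin n₁) (Fin n₂) ℝ} (h : frob A = 0) :
    A = 0 := by
  have h2 : ∑ i, ∑ j, (A i j) ^ 2 = 0 := by
    have := frob_sq A; rw [h] at this; linarith
  ext i j
  have hi := (Finset.sum_eq_zero_iff_of_nonneg (fun i _ =>
    Finset.sum_nonneg fun j _ => sq_nonneg (A i j))).mp h2 i (Finset.mem_univ i)
  have hj := (Finset.sum_eq_zero_iff_of_nonneg (fun j _ => sq_nonneg (A i j))).mp hi j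
    (Finset.mem_univ j)
  simpa using pow_eq_zero_iff (n := 2) (by norm_num) |>.mp hj

lemma frob_smul_sq {n₁ n₂ : ℕ} (c : ℝ) (A : Matrix (Fin n₁) (Fin n₂) ℝ) :
    frob (c • A) ^ 2 = c ^ 2 * frob A ^ 2 := by
  rw [frob_sq, frob_sq, Finset.mul_sum]
  refine Finset.sum_congr rfl fun i _ => ?_
  rw [Finset.mul_sum]
  refine Finset.sum_congr rfl fun j _ => ?_
  simp [Matrix.smul_apply]; ring

lemma rank_smul_le {n₁ n₂ : ℕ} (c : ℝ) (A : Matrix (Fin n₁) (Fin n₂) ℝ) :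
    (c • A).rank ≤ A.rank := by
  have : c • A = (c • (1 : Matrix (Fin n₁) (Fin n₁) ℝ)) * A := by
    rw [Matrix.smul_mul, Matrix.one_mul]
  rw [this]
  exact Matrix.rank_mul_le_right _ _

lemma rank_add_le' {n₁ n₂ : ℕ} (A B : Matrix (Fin n₁) (Fin n₂) ℝ) :
    (A + B).rank ≤ A.rank + B.rank := by
  rw [Matrix.rank, Matrix.rank, Matrix.rank]
  have h : LinearMap.range (A + B).mulVecLin ≤
      LinearMap.range A.mulVecLin ⊔ LinearMap.range B.mulVecLin := by
    rintro x ⟨v, rfl⟩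
    have : (A + B).mulVecLin v = A.mulVecLin v + B.mulVecLin v := by
      simp [Matrix.mulVecLin_apply, Matrix.add_mulVec]
    rw [this]
    exact Submodule.add_mem_sup ⟨v, rfl⟩ ⟨v, rfl⟩
  exact (Submodule.finrank_mono h).trans
    (Submodule.finrank_add_le_finrank_add_finrank _ _)

lemma polarization {n₁ n₂ m r : ℕ}
    (𝓐 : Matrix (Fin n₁) (Fin n₂) ℝ →ₗ[ℝ] (Fin m → ℝ)) (δ : ℝ)
    (hRIP : ∀ M : Matrix (Fin n₁) (Fin n₂) ℝ, M.rank ≤ 2 * r →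
      (1 - δ) * (frob M) ^ 2 ≤ ∑ k, (𝓐 M k) ^ 2 ∧
      ∑ k, (𝓐 M k) ^ 2 ≤ (1 + δ) * (frob M) ^ 2)
    (M N : Matrix (Fin n₁) (Fin n₂) ℝ)
    (hMN : (M + N).rank ≤ 2 * r) (hMN' : (M - N).rank ≤ 2 * r) :
    ∑ k, 𝓐 M k * 𝓐 N k - (∑ i, ∑ j, M i j * N i j)
      ≤ δ / 2 * (frob M ^ 2 + frob N ^ 2) := by
  have h1 := (hRIP (M + N) hMN).2
  have h2 := (hRIP (M - N) hMN').1
  have e1 : ∑ k, (𝓐 (M + N) k) ^ 2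
      = ∑ k, (𝓐 M k) ^ 2 + 2 * ∑ k, 𝓐 M k * 𝓐 N k + ∑ k, (𝓐 N k) ^ 2 := by
    rw [Finset.mul_sum, ← Finset.sum_add_distrib, ← Finset.sum_add_distrib]
    refine Finset.sum_congr rfl fun k _ => ?_
    simp only [map_add, Pi.add_apply]; ring
  have e2 : ∑ k, (𝓐 (M - N) k) ^ 2
      = ∑ k, (𝓐 M k) ^ 2 - 2 * ∑ k, 𝓐 M k * 𝓐 N k + ∑ k, (𝓐 N k) ^ 2 := by
    rw [Finset.mul_sum, ← Finset.sum_sub_distrib, ← Finset.sum_add_distrib]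
    refine Finset.sum_congr rfl fun k _ => ?_
    simp only [map_sub, Pi.sub_apply]; ring
  have f1 : frob (M + N) ^ 2
      = frob M ^ 2 + 2 * ∑ i, ∑ j, M i j * N i j + frob N ^ 2 := by
    rw [frob_sq, frob_sq, frob_sq, Finset.mul_sum, ← Finset.sum_add_distrib,
      ← Finset.sum_add_distrib]
    refine Finset.sum_congr rfl fun i _ => ?_
    rw [Finset.mul_sum, ← Finset.sum_add_distrib, ← Finset.sum_add_distrib]
    refine Finset.sum_congr rfl fun j _ => ?_
    simp only [Matrix.add_apply]; ring
  have f2 : frob (M - N) ^ 2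
      = frob M ^ 2 - 2 * ∑ i, ∑ j, M i j * N i j + frob N ^ 2 := by
    rw [frob_sq, frob_sq, frob_sq, Finset.mul_sum, ← Finset.sum_sub_distrib,
      ← Finset.sum_add_distrib]
    refine Finset.sum_congr rfl fun i _ => ?_
    rw [Finset.mul_sum, ← Finset.sum_sub_distrib, ← Finset.sum_add_distrib]
    refine Finset.sum_congr rfl fun j _ => ?_
    simp only [Matrix.sub_apply]; ring
  rw [e1, f1] at h1
  rw [e2, f2] at h2
  linarith

lemma ip_bound {n₁ n₂ m r : ℕ}
    (𝓐 : Matrix (Fin n₁) (Fin n₂) ℝ →ₗ[ℝ] (Fin m → ℝ)) (δ : ℝ) (hδ0 : 0 ≤ δ)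
    (hRIP : ∀ M : Matrix (Fin n₁) (Fin n₂) ℝ, M.rank ≤ 2 * r →
      (1 - δ) * (frob M) ^ 2 ≤ ∑ k, (𝓐 M k) ^ 2 ∧
      ∑ k, (𝓐 M k) ^ 2 ≤ (1 + δ) * (frob M) ^ 2)
    (X₁ X₂ : Matrix (Fin n₁) (Fin n₂) ℝ) (hX₁ : X₁.rank ≤ r) (hX₂ : X₂.rank ≤ r) :
    ∑ k, 𝓐 X₁ k * 𝓐 X₂ k - (∑ i, ∑ j, X₁ i j * X₂ i j)
      ≤ δ * frob X₁ * frob X₂ := by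
  rcases eq_or_lt_of_le (frob_nonneg X₁) with ha | ha
  · have hz : X₁ = 0 := frob_eq_zero ha.symm
    subst hz
    simp [show frob (0 : Matrix (Fin n₁) (Fin n₂) ℝ) = 0 from by simp [frob]]
  rcases eq_or_lt_of_le (frob_nonneg X₂) with hbz | hbz
  · have hz : X₂ = 0 := frob_eq_zero hbz.symm
    subst hz
    simp [show frob (0 : Matrix (Fin n₁) (Fin n₂) ℝ) = 0 from by simp [frob]]
  set a := frob X₁
  set b := frob X₂
  set t := Real.sqrt (b / a) with htdef
  have ht2 : t ^ 2 = b / a := Real.sq_sqrt (le_of_lt (div_pos hbz ha))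
  have htpos : 0 < t := Real.sqrt_pos.mpr (div_pos hbz ha)
  have hrank1 : (t • X₁ + t⁻¹ • X₂).rank ≤ 2 * r := by
    calc (t • X₁ + t⁻¹ • X₂).rank ≤ (t • X₁).rank + (t⁻¹ • X₂).rank := rank_add_le' _ _
    _ ≤ X₁.rank + X₂.rank := add_le_add (rank_smul_le _ _) (rank_smul_le _ _)
    _ ≤ 2 * r := by omega
  have hrank2 : (t • X₁ - t⁻¹ • X₂).rank ≤ 2 * r := by
    rw [sub_eq_add_neg, ← neg_smul]
    calc (t • X₁ + (-t⁻¹) • X₂).rank ≤ (t • X₁).rank + ((-t⁻¹) • X₂).rank :=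
      rank_add_le' _ _
    _ ≤ X₁.rank + X₂.rank := add_le_add (rank_smul_le _ _) (rank_smul_le _ _)
    _ ≤ 2 * r := by omega
  have key := polarization 𝓐 δ hRIP (t • X₁) (t⁻¹ • X₂) hrank1 hrank2
  have hA : ∑ k, 𝓐 (t • X₁) k * 𝓐 (t⁻¹ • X₂) k = ∑ k, 𝓐 X₁ k * 𝓐 X₂ k := by
    refine Finset.sum_congr rfl fun k _ => ?_
    rw [_root_.map_smul, _root_.map_smul, Pi.smul_apply, Pi.smul_apply, smul_eq_mul, smul_eq_mul,
      mul_mul_mul_comm, mul_inv_cancel₀ htpos.ne', one_mul]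
  have hB : ∑ i, ∑ j, (t • X₁) i j * (t⁻¹ • X₂) i j = ∑ i, ∑ j, X₁ i j * X₂ i j := by
    refine Finset.sum_congr rfl fun i _ => Finset.sum_congr rfl fun j _ => ?_
    rw [Matrix.smul_apply, Matrix.smul_apply, smul_eq_mul, smul_eq_mul,
      mul_mul_mul_comm, mul_inv_cancel₀ htpos.ne', one_mul]
  rw [hA, hB, frob_smul_sq, frob_smul_sq] at key
  have hta : t ^ 2 * a ^ 2 = a * b := by
    rw [ht2]; field_simp
  have htb : t⁻¹ ^ 2 * b ^ 2 = a * b := by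
    rw [inv_pow, ht2]; field_simp
  rw [hta, htb] at key
  calc ∑ k, 𝓐 X₁ k * 𝓐 X₂ k - ∑ i, ∑ j, X₁ i j * X₂ i j
      ≤ δ / 2 * (a * b + a * b) := key
    _ = δ * a * b := by ring

lemma frob_mul_transpose_le {n₁ n₂ r : ℕ} (M : Matrix (Fin n₁) (Fin r) ℝ)
    (R : Matrix (Fin n₂) (Fin r) ℝ) :
    frob (M * Rᵀ) ≤ frob M * opNorm R := by
  have hb : 0 ≤ frob M * opNorm R := mul_nonneg (frob_nonneg _) (norm_nonneg _)
  rw [frob, ← Real.sqrt_sq hb]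
  apply Real.sqrt_le_sqrt
  have : (frob M * opNorm R) ^ 2 = ∑ i, opNorm R ^ 2 * ∑ k, (M i k) ^ 2 := by
    rw [mul_pow, frob_sq, Finset.sum_mul]
    exact Finset.sum_congr rfl fun i _ => by rw [mul_comm]
  rw [this]
  refine Finset.sum_le_sum fun i _ => ?_
  set L := LinearMap.toContinuousLinearMap (Matrix.toEuclideanLin R) with hL
  set v : EuclideanSpace ℝ (Fin r) := (WithLp.equiv 2 (Fin r → ℝ)).symm (M i) with hv
  have hLv : ∀ j, L v j = (M * Rᵀ) i j := by
    intro j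
    show Matrix.toEuclideanLin R v j = _
    rw [Matrix.toEuclideanLin_apply]
    show (R *ᵥ (M i)) j = (M * Rᵀ) i j
    simp [Matrix.mulVec, Matrix.mul_apply, dotProduct, mul_comm]
  have hnLv : ‖L v‖ ^ 2 = ∑ j, ((M * Rᵀ) i j) ^ 2 := by
    rw [EuclideanSpace.norm_eq, Real.sq_sqrt (Finset.sum_nonneg fun j _ => sq_nonneg _)]
    exact Finset.sum_congr rfl fun j _ => by rw [Real.norm_eq_abs, sq_abs, hLv]
  have hnv : ‖v‖ ^ 2 = ∑ k, (M i k) ^ 2 := by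
    rw [EuclideanSpace.norm_eq, Real.sq_sqrt (Finset.sum_nonneg fun k _ => sq_nonneg _)]
    exact Finset.sum_congr rfl fun k _ => by rw [Real.norm_eq_abs, sq_abs]; rfl
  have hle := L.le_opNorm v
  have := pow_le_pow_left₀ (norm_nonneg (L v)) hle 2
  rw [hnLv, mul_pow, hnv] at this
  exact this

/-- RIP consequence: if the linear map `𝓐` satisfies the rank-`2r` restricted isometry
property with constant `δ`, then for any matrix `X₁` of rank at most `r` and any `R`,
`‖(𝓐*𝓐 − I)(X₁) R‖_F ≤ δ ‖X₁‖_F ‖R‖_op`, where `𝓐*` is the adjoint of `𝓐`. -/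
theorem rip_adjoint_residual_bound {n₁ n₂ m r : ℕ}
    (𝓐 : Matrix (Fin n₁) (Fin n₂) ℝ →ₗ[ℝ] (Fin m → ℝ))
    (δ : ℝ) (hδ0 : 0 ≤ δ) (hδ1 : δ < 1)
    (hRIP : ∀ M : Matrix (Fin n₁) (Fin n₂) ℝ, M.rank ≤ 2 * r →
      (1 - δ) * (frob M) ^ 2 ≤ ∑ k, (𝓐 M k) ^ 2 ∧
      ∑ k, (𝓐 M k) ^ 2 ≤ (1 + δ) * (frob M) ^ 2)
    (Aadj : (Fin m → ℝ) → Matrix (Fin n₁) (Fin n₂) ℝ)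
    (hAadj : ∀ (y : Fin m → ℝ) (M : Matrix (Fin n₁) (Fin n₂) ℝ),
      ∑ i, ∑ j, Aadj y i j * M i j = ∑ k, y k * 𝓐 M k)
    (X₁ : Matrix (Fin n₁) (Fin n₂) ℝ) (hX₁ : X₁.rank ≤ r)
    (R : Matrix (Fin n₂) (Fin r) ℝ) :
    frob ((Aadj (𝓐 X₁) - X₁) * R) ≤ δ * frob X₁ * opNorm R := by
  set E := Aadj (𝓐 X₁) - X₁ with hE
  set X₂ := (E * R) * Rᵀ with hX₂def
  have hrankX₂ : X₂.rank ≤ r := by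
    calc X₂.rank ≤ Rᵀ.rank := Matrix.rank_mul_le_right _ _
    _ ≤ r := by simpa using Matrix.rank_le_card_height Rᵀ
  -- ⟨E, X₂⟩ = frob (E*R)^2
  have eq1 : ∑ i, ∑ j, E i j * X₂ i j = frob (E * R) ^ 2 := by
    rw [frob_sq]
    refine Finset.sum_congr rfl fun i _ => ?_
    calc ∑ j, E i j * X₂ i j
        = ∑ j, ∑ k, (E * R) i k * (E i j * R j k) := by
          refine Finset.sum_congr rfl fun j _ => ?_
          rw [hX₂def, Matrix.mul_apply, Finset.mul_sum]
          exact Finset.sum_congr rfl fun k _ => by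
            rw [Matrix.transpose_apply]; ring
      _ = ∑ k, (E * R) i k * ∑ j, E i j * R j k := by
          rw [Finset.sum_comm]
          exact Finset.sum_congr rfl fun k _ => by rw [Finset.mul_sum]
      _ = ∑ k, ((E * R) i k) ^ 2 := by
          refine Finset.sum_congr rfl fun k _ => ?_
          rw [← Matrix.mul_apply, sq]
  -- ⟨E, X₂⟩ = ⟨𝓐X₁, 𝓐X₂⟩ - ⟨X₁, X₂⟩
  have eq2 : ∑ i, ∑ j, E i j * X₂ i j
      = ∑ k, 𝓐 X₁ k * 𝓐 X₂ k - ∑ i, ∑ j, X₁ i j * X₂ i j := by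
    have expand : ∑ i, ∑ j, E i j * X₂ i j
        = ∑ i, ∑ j, Aadj (𝓐 X₁) i j * X₂ i j - ∑ i, ∑ j, X₁ i j * X₂ i j := by
      rw [← Finset.sum_sub_distrib]
      refine Finset.sum_congr rfl fun i _ => ?_
      rw [← Finset.sum_sub_distrib]
      refine Finset.sum_congr rfl fun j _ => ?_
      rw [hE, Matrix.sub_apply]; ring
    rw [expand, hAadj (𝓐 X₁) X₂]
  have hipb := ip_bound 𝓐 δ hδ0 hRIP X₁ X₂ hX₁ hrankX₂
  have hfX₂ : frob X₂ ≤ frob (E * R) * opNorm R := frob_mul_transpose_le (E * R) R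
  have hC : frob (E * R) ^ 2 ≤ δ * frob X₁ * (frob (E * R) * opNorm R) := by
    rw [← eq1, eq2]
    refine hipb.trans ?_
    exact mul_le_mul_of_nonneg_left hfX₂ (mul_nonneg hδ0 (frob_nonneg X₁))
  rcases eq_or_lt_of_le (frob_nonneg (E * R)) with hzero | hpos
  · rw [← hzero]
    exact mul_nonneg (mul_nonneg hδ0 (frob_nonneg X₁)) (norm_nonneg _)
  · nlinarith [hC, hpos]
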